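/- arXiv:2404.13410 — 10 statements merged into one kernel-verified Lean document; each statement's English description precedes it below -/
import Mathlib

section
/- Let α > γ > 0 and σ ≥ μ > 0. Then the function β ↦ −δ₁(β) is strictly increasing on the interval (σ/γ, +∞), where δ₁(β) = (1/2)·(μ a_β + σ b_β − √(4β²αγ a_β b_β + (μ a_β − σ b_β)²)). -/
/-- The positive constant solution component `a_β`. -/
noncomputable def aβ (μ σ α γ β : ℝ) : ℝ := (β * α - μ) * σ / (β ^ 2 * α * γ - μ * σ)

/-- The positive constant solution component `b_β`. -/
noncomputable def bβ (μ σ α γ β : ℝ) : ℝ := (β * γ - σ) * μ / (β ^ 2 * α * γ - μ * σ)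

/-- The smaller eigenvalue `δ₁(β)` of the linearization matrix. -/
noncomputable def δ₁ (μ σ α γ β : ℝ) : ℝ :=
  (1 / 2) * (μ * aβ μ σ α γ β + σ * bβ μ σ α γ β -
    Real.sqrt (4 * β ^ 2 * α * γ * aβ μ σ α γ β * bβ μ σ α γ β +
      (μ * aβ μ σ α γ β - σ * bβ μ σ α γ β) ^ 2))

private lemma basics (μ σ α γ β : ℝ) (hαγ : γ < α) (hγ : 0 < γ) (hμσ : μ ≤ σ) (hμ : 0 < μ)
    (hβ : σ / γ < β) :
    0 < σ ∧ 0 < β ∧ σ < β * γ ∧ μ < β * α ∧ 0 < β ^ 2 * α * γ - μ * σ := by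
  have hσ : 0 < σ := lt_of_lt_of_le hμ hμσ
  have hβ0 : 0 < β := lt_trans (div_pos hσ hγ) hβ
  have hβγ : σ < β * γ := (div_lt_iff₀ hγ).mp hβ
  have hβα : μ < β * α := by nlinarith
  refine ⟨hσ, hβ0, hβγ, hβα, ?_⟩
  nlinarith [mul_pos hμ hσ]

private lemma delta_eq (μ σ α γ β : ℝ) (hαγ : γ < α) (hγ : 0 < γ) (hμσ : μ ≤ σ) (hμ : 0 < μ)
    (hβ : σ / γ < β) :
    ∃ x : ℝ, -δ₁ μ σ α γ β = x ∧ 0 < x ∧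
      0 < x + μ * σ * (β * (α + γ) - (μ + σ)) / (β ^ 2 * α * γ - μ * σ) ∧
      x ^ 2 + μ * σ * (β * (α + γ) - (μ + σ)) / (β ^ 2 * α * γ - μ * σ) * x
        = μ * σ * ((β * α - μ) * (β * γ - σ)) / (β ^ 2 * α * γ - μ * σ) := by
  obtain ⟨hσ, hβ0, hβγ, hβα, hD⟩ := basics μ σ α γ β hαγ hγ hμσ hμ hβ
  have hDne : (β ^ 2 * α * γ - μ * σ) ≠ 0 := ne_of_gt hD
  set s : ℝ := μ * σ * (β * (α + γ) - (μ + σ)) / (β ^ 2 * α * γ - μ * σ) with hs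
  set c : ℝ := μ * σ * ((β * α - μ) * (β * γ - σ)) / (β ^ 2 * α * γ - μ * σ) with hc
  have hc0 : 0 < c := by
    apply div_pos _ hD
    have := mul_pos (mul_pos hμ hσ) (mul_pos (sub_pos.2 hβα) (sub_pos.2 hβγ))
    linarith [this]
  have hsum : μ * aβ μ σ α γ β + σ * bβ μ σ α γ β = s := by
    rw [aβ, bβ, hs]; field_simp; ring
  have hrad : 4 * β ^ 2 * α * γ * aβ μ σ α γ β * bβ μ σ α γ β +
      (μ * aβ μ σ α γ β - σ * bβ μ σ α γ β) ^ 2 = s ^ 2 + 4 * c := by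
    rw [aβ, bβ, hs, hc]; field_simp; ring
  set t : ℝ := Real.sqrt (s ^ 2 + 4 * c) with ht
  have hq : (0:ℝ) ≤ s ^ 2 + 4 * c := by positivity
  have ht2 : t ^ 2 = s ^ 2 + 4 * c := Real.sq_sqrt hq
  have hts : |s| < t := by
    rw [ht, ← Real.sqrt_sq_eq_abs]
    exact Real.sqrt_lt_sqrt (sq_nonneg s) (by linarith)
  have hslt : s < t := lt_of_le_of_lt (le_abs_self s) hts
  have hslt' : -s < t := lt_of_le_of_lt (neg_le_abs s) hts
  refine ⟨(t - s) / 2, ?_, by linarith, by linarith, by linear_combination ht2 / 4⟩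
  rw [δ₁, hsum, hrad, ← ht]; ring

private lemma s_anti (μ σ α γ : ℝ) (hαγ : γ < α) (hγ : 0 < γ) (hμσ : μ ≤ σ) (hμ : 0 < μ)
    (x y : ℝ) (hx : σ / γ < x) (hxy : x < y) :
    μ * σ * (y * (α + γ) - (μ + σ)) / (y ^ 2 * α * γ - μ * σ)
      < μ * σ * (x * (α + γ) - (μ + σ)) / (x ^ 2 * α * γ - μ * σ) := by
  have hy : σ / γ < y := hx.trans hxy
  obtain ⟨hσ, hx0, hxγ, hxα, hDx⟩ := basics μ σ α γ x hαγ hγ hμσ hμ hx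
  obtain ⟨-, hy0, hyγ, hyα, hDy⟩ := basics μ σ α γ y hαγ hγ hμσ hμ hy
  have hA : 0 < α := hγ.trans hαγ
  have h4 : 0 < α * σ - γ * μ := by nlinarith [mul_pos hσ (sub_pos.2 hαγ)]
  have h3 : 0 < (α + γ) * y - (μ + σ) := by
    nlinarith [mul_pos (sub_pos.2 hyγ) (by linarith : (0:ℝ) < α + γ),
      mul_pos hσ (sub_pos.2 hαγ), mul_nonneg hγ.le (sub_nonneg.2 hμσ)]
  have h5 : 0 < α * y - σ := by nlinarith [mul_pos hy0 (sub_pos.2 hαγ)]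
  have hint1 : 0 < α * γ * (((α + γ) * y - (μ + σ)) * (γ * x - σ)) :=
    mul_pos (mul_pos hA hγ) (mul_pos h3 (by linarith))
  have hint2 : 0 < γ * ((α * σ - γ * μ) * (α * y - σ)) :=
    mul_pos hγ (mul_pos h4 h5)
  have hbr : 0 < α * γ * (α + γ) * (x * y) - α * γ * (μ + σ) * x - α * γ * (μ + σ) * y
      + μ * σ * (α + γ) := by
    nlinarith [hint1, hint2, hγ]
  rw [div_lt_div_iff₀ hDy hDx]
  nlinarith [mul_pos (mul_pos (mul_pos hμ hσ) (sub_pos.2 hxy)) hbr]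

private lemma c_mono (μ σ α γ : ℝ) (hαγ : γ < α) (hγ : 0 < γ) (hμσ : μ ≤ σ) (hμ : 0 < μ)
    (x y : ℝ) (hx : σ / γ < x) (hxy : x < y) :
    μ * σ * ((x * α - μ) * (x * γ - σ)) / (x ^ 2 * α * γ - μ * σ)
      < μ * σ * ((y * α - μ) * (y * γ - σ)) / (y ^ 2 * α * γ - μ * σ) := by
  have hy : σ / γ < y := hx.trans hxy
  obtain ⟨hσ, hx0, hxγ, hxα, hDx⟩ := basics μ σ α γ x hαγ hγ hμσ hμ hx
  obtain ⟨-, hy0, hyγ, hyα, hDy⟩ := basics μ σ α γ y hαγ hγ hμσ hμ hy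
  have hA : 0 < α := hγ.trans hαγ
  have h4 : 0 < α * σ - γ * μ := by nlinarith [mul_pos hσ (sub_pos.2 hαγ)]
  have hR : 0 < α * σ + γ * μ := by positivity
  have hRx : 0 < (α * σ + γ * μ) * x - 2 * (μ * σ) := by
    nlinarith [mul_pos hR (sub_pos.2 hxγ), mul_pos hσ h4]
  have hRy : 0 < (α * σ + γ * μ) * y - 2 * (μ * σ) := by
    nlinarith [mul_pos hR (sub_pos.2 hyγ), mul_pos hσ h4]
  have hint1 : 0 < α * γ * (((α * σ + γ * μ) * x - 2 * (μ * σ)) *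
      ((α * σ + γ * μ) * y - 2 * (μ * σ))) := mul_pos (mul_pos hA hγ) (mul_pos hRx hRy)
  have hint2 : 0 < μ * σ * (α * σ - γ * μ) ^ 2 := by positivity
  have hbr : 0 < α * γ * (α * σ + γ * μ) * (x * y) - 2 * α * γ * (μ * σ) * x
      - 2 * α * γ * (μ * σ) * y + μ * σ * (α * σ + γ * μ) := by
    nlinarith [hint1, hint2, hR]
  rw [div_lt_div_iff₀ hDx hDy]
  nlinarith [mul_pos (mul_pos (mul_pos hμ hσ) (sub_pos.2 hxy)) hbr]

/-- For α > γ > 0 and σ ≥ μ > 0, the map β ↦ −δ₁(β) is strictly increasing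
on (σ/γ, ∞). -/
theorem neg_delta1_strictMonoOn
    (μ σ α γ : ℝ) (hαγ : γ < α) (hγ : 0 < γ) (hμσ : μ ≤ σ) (hμ : 0 < μ) :
    StrictMonoOn (fun β : ℝ => -δ₁ μ σ α γ β) (Set.Ioi (σ / γ)) := by
  intro b1 hb1 b2 hb2 h12
  simp only [Set.mem_Ioi] at hb1 hb2
  obtain ⟨x1, hx1e, hx1pos, hx1s, hx1c⟩ := delta_eq μ σ α γ b1 hαγ hγ hμσ hμ hb1
  obtain ⟨x2, hx2e, hx2pos, hx2s, hx2c⟩ := delta_eq μ σ α γ b2 hαγ hγ hμσ hμ hb2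
  simp only
  rw [hx1e, hx2e]
  have hs := s_anti μ σ α γ hαγ hγ hμσ hμ b1 b2 hb1 h12
  have hcc := c_mono μ σ α γ hαγ hγ hμσ hμ b1 b2 hb1 h12
  set s1 := μ * σ * (b1 * (α + γ) - (μ + σ)) / (b1 ^ 2 * α * γ - μ * σ)
  set s2 := μ * σ * (b2 * (α + γ) - (μ + σ)) / (b2 ^ 2 * α * γ - μ * σ)
  set c1 := μ * σ * ((b1 * α - μ) * (b1 * γ - σ)) / (b1 ^ 2 * α * γ - μ * σ)
  set c2 := μ * σ * ((b2 * α - μ) * (b2 * γ - σ)) / (b2 ^ 2 * α * γ - μ * σ)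
  nlinarith [mul_pos (sub_pos.2 hs) hx1pos, hx1c, hx2c, hcc, hx2s, hx1pos, hx2pos,
    mul_pos hx1pos hx2pos]
end

section
/- Let α > γ > 0 and σ ≥ μ > 0. Then for every β > σ/γ one has 0 < −δ₁(β) < √(μσ). In particular δ₁(β) < 0 for all β > σ/γ. -/
/-- For α > γ > 0, σ ≥ μ > 0 and every β > σ/γ, one has 0 < −δ₁(β) < √(μσ). -/
theorem neg_delta1_bounds
    (μ σ α γ : ℝ) (hαγ : γ < α) (hγ : 0 < γ) (hμσ : μ ≤ σ) (hμ : 0 < μ)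
    (β : ℝ) (hβ : σ / γ < β) :
    0 < -δ₁ μ σ α γ β ∧ -δ₁ μ σ α γ β < Real.sqrt (μ * σ) := by
  have hσ : 0 < σ := lt_of_lt_of_le hμ hμσ
  have hβγ : σ < β * γ := (div_lt_iff₀ hγ).mp hβ
  have hβpos : 0 < β := lt_trans (div_pos hσ hγ) hβ
  have hβα : μ < β * α := by nlinarith
  have hD : 0 < β ^ 2 * α * γ - μ * σ := by nlinarith
  set D := β ^ 2 * α * γ - μ * σ with hDdef
  set a := aβ μ σ α γ β with hadef
  set b := bβ μ σ α γ β with hbdef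
  have haeq : a = (β * α - μ) * σ / D := rfl
  have hbeq : b = (β * γ - σ) * μ / D := rfl
  have ha : 0 < a := by rw [haeq]; exact div_pos (by nlinarith) hD
  have hb : 0 < b := by rw [hbeq]; exact div_pos (by nlinarith) hD
  set S := μ * a + σ * b with hSdef
  have hS : 0 < S := by positivity
  have h1 : (β * α - μ) * (β * γ - σ) < D := by
    rw [hDdef]
    nlinarith [mul_pos hσ (sub_pos.mpr hβα), mul_pos hμ (sub_pos.mpr hβγ)]
  have hkey : a * b * D < μ * σ := by
    have habD : a * b * D = (β * α - μ) * (β * γ - σ) * (μ * σ) / D := by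
      rw [haeq, hbeq]; field_simp
    rw [habD, div_lt_iff₀ hD]
    nlinarith [mul_pos (mul_pos hμ hσ) (sub_pos.mpr h1)]
  have hE : 4 * β ^ 2 * α * γ * a * b + (μ * a - σ * b) ^ 2
      = S ^ 2 + 4 * (a * b * D) := by
    rw [hSdef, hDdef]; ring
  have habDpos : 0 < a * b * D := by positivity
  have hδ : δ₁ μ σ α γ β = (1 / 2) * (S - Real.sqrt (S ^ 2 + 4 * (a * b * D))) := by
    rw [δ₁, ← hadef, ← hbdef, hE, hSdef]
  have hlow : S < Real.sqrt (S ^ 2 + 4 * (a * b * D)) := by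
    rw [Real.lt_sqrt hS.le]
    linarith
  constructor
  · rw [hδ]; linarith
  · rw [hδ]
    have hup : Real.sqrt (S ^ 2 + 4 * (a * b * D)) < S + 2 * Real.sqrt (μ * σ) := by
      have hsq : Real.sqrt (μ * σ) ^ 2 = μ * σ := Real.sq_sqrt (by positivity)
      have hsqpos : 0 < Real.sqrt (μ * σ) := Real.sqrt_pos.mpr (by positivity)
      rw [show (Real.sqrt (S ^ 2 + 4 * (a * b * D)) < S + 2 * Real.sqrt (μ * σ))
          ↔ S ^ 2 + 4 * (a * b * D) < (S + 2 * Real.sqrt (μ * σ)) ^ 2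
        from Real.sqrt_lt' (by positivity)]
      nlinarith [mul_pos hS hsqpos]
    linarith
end

section
/- Let α > γ > 0 and σ ≥ μ > 0. Then −δ₁(β) tends to √(μσ) as β → +∞, i.e. the function β ↦ −δ₁(β) converges to √(μσ) along the filter at infinity. -/
/-- For α > γ > 0 and σ ≥ μ > 0, −δ₁(β) → √(μσ) as β → +∞. -/
theorem neg_delta1_tendsto_sqrt
    (μ σ α γ : ℝ) (hαγ : γ < α) (hγ : 0 < γ) (hμσ : μ ≤ σ) (hμ : 0 < μ) :
    Filter.Tendsto (fun β : ℝ => -δ₁ μ σ α γ β) Filter.atTop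
      (nhds (Real.sqrt (μ * σ))) := by
  have hα : 0 < α := hγ.trans hαγ
  have hσ : 0 < σ := hμ.trans_le hμσ
  have hαγ0 : (0:ℝ) < α * γ := by positivity
  set F : ℝ → ℝ := fun x => μ*σ*((α+γ)*x - (μ+σ)*x^2)/(α*γ - μ*σ*x^2) with hFdef
  set G : ℝ → ℝ := fun x =>
    (4*α*γ*μ*σ*((α - μ*x)*(γ - σ*x)) + μ^2*σ^2*x^2*((α-γ) - (μ-σ)*x)^2)
      / (α*γ - μ*σ*x^2)^2 with hGdef
  have hinv : Filter.Tendsto (fun β:ℝ => β⁻¹) Filter.atTop (nhds 0) :=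
    tendsto_inv_atTop_zero
  have hFc : ContinuousAt F 0 := by
    apply ContinuousAt.div
    · fun_prop
    · fun_prop
    · simpa using hαγ0.ne'
  have hGc : ContinuousAt G 0 := by
    apply ContinuousAt.div
    · fun_prop
    · fun_prop
    · simpa using pow_ne_zero 2 hαγ0.ne'
  have hF0 : F 0 = 0 := by simp [hFdef]
  have hG0 : G 0 = 4*(μ*σ) := by
    simp only [hGdef]
    field_simp
    ring
  have hS : Filter.Tendsto (fun β:ℝ => F β⁻¹) Filter.atTop (nhds 0) := by
    have h := hFc.tendsto.comp hinv
    rw [hF0] at h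
    exact h
  have hE : Filter.Tendsto (fun β:ℝ => Real.sqrt (G β⁻¹)) Filter.atTop
      (nhds (Real.sqrt (4*(μ*σ)))) := by
    exact (Real.continuous_sqrt.continuousAt.tendsto.comp
      (by have h := hGc.tendsto.comp hinv; rw [hG0] at h; exact h))
  have key : Filter.Tendsto (fun β:ℝ => (1/2)*(Real.sqrt (G β⁻¹) - F β⁻¹))
      Filter.atTop (nhds ((1/2)*(Real.sqrt (4*(μ*σ)) - 0))) :=
    (hE.sub hS).const_mul _
  have hsqrt4 : Real.sqrt (4*(μ*σ)) = 2 * Real.sqrt (μ*σ) := by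
    rw [show (4:ℝ)*(μ*σ) = 2^2*(μ*σ) by ring, Real.sqrt_mul (by positivity),
      Real.sqrt_sq (by norm_num)]
  have hlim : ((1:ℝ)/2)*(Real.sqrt (4*(μ*σ)) - 0) = Real.sqrt (μ*σ) := by
    rw [hsqrt4]; ring
  rw [← hlim]
  apply key.congr'
  filter_upwards [Filter.eventually_ge_atTop (max 1 (μ*σ/(α*γ)+1))] with β hβ
  have hβ1 : (1:ℝ) ≤ β := le_trans (le_max_left _ _) hβ
  have hβ2 : μ*σ/(α*γ)+1 ≤ β := le_trans (le_max_right _ _) hβ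
  have hβ0 : β ≠ 0 := by positivity
  have hβsq : μ*σ/(α*γ) + 1 ≤ β^2 := by nlinarith
  have hD : 0 < β^2*α*γ - μ*σ := by
    have := (div_le_iff₀ hαγ0).mp (by linarith : μ*σ/(α*γ) ≤ β^2 - 1)
    nlinarith
  have hD' : β^2*α*γ - μ*σ ≠ 0 := hD.ne'
  have hDinv : α*γ - μ*σ*(β⁻¹)^2 ≠ 0 := by
    have h : α*γ - μ*σ*(β⁻¹)^2 = (β^2*α*γ - μ*σ)/β^2 := by
      field_simp
    rw [h]
    positivity
  have hFval : F β⁻¹ = μ*σ*(β*(α+γ) - (μ+σ))/(β^2*α*γ - μ*σ) := by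
    simp only [hFdef]
    rw [div_eq_div_iff hDinv hD']
    field_simp
  have hDinv2 : (α*γ - μ*σ*(β⁻¹)^2)^2 ≠ 0 := pow_ne_zero 2 hDinv
  have hD2 : (β^2*α*γ - μ*σ)^2 ≠ 0 := pow_ne_zero 2 hD'
  have hGval : G β⁻¹ = (4*α*γ*μ*σ*(β^2*((β*α - μ)*(β*γ - σ)))
      + μ^2*σ^2*(β*(α-γ) - (μ-σ))^2) / (β^2*α*γ - μ*σ)^2 := by
    simp only [hGdef]
    rw [div_eq_div_iff hDinv2 hD2]
    field_simp
  have ha : μ * aβ μ σ α γ β + σ * bβ μ σ α γ β = F β⁻¹ := by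
    rw [hFval]
    simp only [aβ, bβ]
    field_simp
    ring
  have hb : 4 * β ^ 2 * α * γ * aβ μ σ α γ β * bβ μ σ α γ β +
      (μ * aβ μ σ α γ β - σ * bβ μ σ α γ β) ^ 2 = G β⁻¹ := by
    rw [hGval]
    simp only [aβ, bβ]
    field_simp
    ring
  simp only [δ₁]
  rw [ha, hb]
  ring
end

section
/- Let α > γ > 0 and σ ≥ μ > 0. Then for every real number λ with 0 < λ < √(μσ) there exists a unique β in the interval (σ/γ, +∞) such that −δ₁(β) = λ. -/
lemma sqrt_shift_aux (s X l : ℝ) (hX : 0 ≤ X) (h : 0 < s + 2 * l) :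
    -((1:ℝ)/2 * (s - Real.sqrt X)) = l ↔ X = (s + 2 * l) ^ 2 := by
  constructor
  · intro h'
    have hs : Real.sqrt X = s + 2 * l := by linarith
    rw [← hs, Real.sq_sqrt hX]
  · intro h'
    rw [h', Real.sqrt_sq h.le]; ring

lemma delta_iff_quadratic (μ σ α γ lam : ℝ) (hαγ : γ < α) (hγ : 0 < γ) (hμσ : μ ≤ σ)
    (hμ : 0 < μ) (hlam0 : 0 < lam) (β : ℝ) (hβ : σ / γ < β) :
    -δ₁ μ σ α γ β = lam ↔
      α * γ * (μ * σ - lam ^ 2) * (β * β) +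
        -(μ * σ * ((σ + lam) * α + (μ + lam) * γ)) * β + μ * σ * (μ + lam) * (σ + lam) = 0 := by
  have hσ : 0 < σ := lt_of_lt_of_le hμ hμσ
  have hα : 0 < α := hγ.trans hαγ
  have hβγ : σ < β * γ := (div_lt_iff₀ hγ).mp hβ
  have hβ0 : 0 < β := lt_trans (div_pos hσ hγ) hβ
  have hβα : σ < β * α := by nlinarith
  have hμβα : μ < β * α := lt_of_le_of_lt hμσ hβα
  have hD : 0 < β ^ 2 * α * γ - μ * σ := by nlinarith
  unfold δ₁
  set a := aβ μ σ α γ β with ha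
  set b := bβ μ σ α γ β with hb
  have ha0 : 0 < a := by
    rw [ha, aβ]; exact div_pos (mul_pos (by linarith) hσ) hD
  have hb0 : 0 < b := by
    rw [hb, bβ]; exact div_pos (mul_pos (by linarith) hμ) hD
  set X := 4 * β ^ 2 * α * γ * a * b + (μ * a - σ * b) ^ 2 with hXdef
  have hX0 : 0 ≤ X := by
    have h1 : 0 ≤ 4 * β ^ 2 * α * γ * a * b := by positivity
    nlinarith [sq_nonneg (μ * a - σ * b)]
  have hs : 0 < μ * a + σ * b + 2 * lam := by nlinarith [mul_pos hμ ha0, mul_pos hσ hb0]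
  rw [sqrt_shift_aux (μ * a + σ * b) X lam hX0 hs]
  have key : X - (μ * a + σ * b + 2 * lam) ^ 2 =
      (4 / (β ^ 2 * α * γ - μ * σ)) *
        (α * γ * (μ * σ - lam ^ 2) * (β * β) +
          -(μ * σ * ((σ + lam) * α + (μ + lam) * γ)) * β + μ * σ * (μ + lam) * (σ + lam)) := by
    rw [hXdef, ha, hb]; unfold aβ bβ
    field_simp
    ring
  have hc : (4 : ℝ) / (β ^ 2 * α * γ - μ * σ) ≠ 0 := by positivity
  constructor
  · intro h
    have h0 : (4 / (β ^ 2 * α * γ - μ * σ)) *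
        (α * γ * (μ * σ - lam ^ 2) * (β * β) +
          -(μ * σ * ((σ + lam) * α + (μ + lam) * γ)) * β + μ * σ * (μ + lam) * (σ + lam)) = 0 := by
      rw [← key, h]; ring
    rcases mul_eq_zero.mp h0 with h1 | h1
    · exact absurd h1 hc
    · exact h1
  · intro h
    rw [h, mul_zero] at key
    linarith

/-- For α > γ > 0 and σ ≥ μ > 0, and every 0 < λ < √(μσ), there is a unique
β ∈ (σ/γ, ∞) with −δ₁(β) = λ. -/
theorem neg_delta1_existsUnique
    (μ σ α γ : ℝ) (hαγ : γ < α) (hγ : 0 < γ) (hμσ : μ ≤ σ) (hμ : 0 < μ)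
    (lam : ℝ) (hlam0 : 0 < lam) (hlam1 : lam < Real.sqrt (μ * σ)) :
    ∃! β : ℝ, β ∈ Set.Ioi (σ / γ) ∧ -δ₁ μ σ α γ β = lam := by
  have hσ : 0 < σ := lt_of_lt_of_le hμ hμσ
  have hα : 0 < α := hγ.trans hαγ
  have hlam2 : lam ^ 2 < μ * σ := by
    have := Real.sq_sqrt (by positivity : (0:ℝ) ≤ μ * σ)
    nlinarith [Real.sqrt_nonneg (μ * σ)]
  set A := α * γ * (μ * σ - lam ^ 2) with hA
  set B := -(μ * σ * ((σ + lam) * α + (μ + lam) * γ)) with hB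
  set C := μ * σ * (μ + lam) * (σ + lam) with hC
  have hA0 : 0 < A := by rw [hA]; exact mul_pos (mul_pos hα hγ) (by linarith)
  set x0 := σ / γ with hx0
  have hf0 : A * (x0 * x0) + B * x0 + C < 0 := by
    have heq : A * (x0 * x0) + B * x0 + C = -(lam * σ * (μ + lam) * (σ * α - μ * γ)) / γ := by
      rw [hA, hB, hC, hx0]; field_simp; ring
    rw [heq]
    have h1 : 0 < σ * α - μ * γ := by nlinarith
    have h2 : 0 < lam * σ * (μ + lam) * (σ * α - μ * γ) := by positivity
    exact div_neg_of_neg_of_pos (by linarith) hγ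
  have hdisc : 0 < discrim A B C := by
    have hid : discrim A B C = (2 * A * x0 + B) ^ 2 - 4 * A * (A * (x0 * x0) + B * x0 + C) := by
      rw [discrim]; ring
    nlinarith [sq_nonneg (2 * A * x0 + B), mul_pos hA0 (by linarith : 0 < -(A * (x0 * x0) + B * x0 + C))]
  set s0 := Real.sqrt (discrim A B C) with hs0def
  have hs0 : discrim A B C = s0 * s0 := (Real.mul_self_sqrt hdisc.le).symm
  have hs0pos : 0 < s0 := Real.sqrt_pos.mpr hdisc
  have hroot := quadratic_eq_zero_iff hA0.ne' hs0
  set β₀ := (-B + s0) / (2 * A) with hβ₀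
  have hgt : s0 > 2 * A * x0 + B := by
    have hid : s0 * s0 - (2 * A * x0 + B) ^ 2 = -(4 * A) * (A * (x0 * x0) + B * x0 + C) := by
      rw [← hs0, discrim]; ring
    nlinarith [mul_pos hA0 (by linarith : 0 < -(A * (x0 * x0) + B * x0 + C)), sq_nonneg (s0 + (2 * A * x0 + B))]
  have hβ₀gt : x0 < β₀ := by
    rw [hβ₀, lt_div_iff₀ (by positivity : (0:ℝ) < 2 * A)]
    nlinarith
  refine ⟨β₀, ⟨hβ₀gt, ?_⟩, ?_⟩
  · rw [delta_iff_quadratic μ σ α γ lam hαγ hγ hμσ hμ hlam0 β₀ hβ₀gt]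
    exact (hroot β₀).mpr (Or.inl rfl)
  · rintro β' ⟨hβ'1, hβ'2⟩
    have hq : A * (β' * β') + B * β' + C = 0 :=
      (delta_iff_quadratic μ σ α γ lam hαγ hγ hμσ hμ hlam0 β' hβ'1).mp hβ'2
    rcases (hroot β').mp hq with h | h
    · exact h
    · exfalso
      have hβ'x : x0 < β' := hβ'1
      have : 2 * A * β' = -B - s0 := by
        rw [h]; field_simp
      nlinarith
end

section
/- Let α > γ > 0, σ ≥ μ > 0, λ > 0 and β ≥ σ/γ. Then −(λ + μ)β³αγ² + β²γμ(2γλ + σα) + βγμσ(μ − λ) − μ²σ² < 0. -/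
/-- For α > γ > 0, σ ≥ μ > 0, λ > 0 and β ≥ σ/γ,
−(λ + μ)β³αγ² + β²γμ(2γλ + σα) + βγμσ(μ − λ) − μ²σ² < 0. -/
theorem H_beta_neg
    (μ σ α γ lam β : ℝ) (hαγ : γ < α) (hγ : 0 < γ) (hμσ : μ ≤ σ) (hμ : 0 < μ)
    (hlam : 0 < lam) (hβ : σ / γ ≤ β) :
    -(lam + μ) * β ^ 3 * α * γ ^ 2 + β ^ 2 * γ * μ * (2 * γ * lam + σ * α) +
      β * γ * μ * σ * (μ - lam) - μ ^ 2 * σ ^ 2 < 0 := by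
  have hb : σ ≤ β * γ := (div_le_iff₀ hγ).mp hβ
  have hβpos : 0 < β := by
    have h : 0 < β * γ := lt_of_lt_of_le (hμ.trans_le hμσ) hb
    nlinarith [h, hγ]
  have hbγ : 0 < β * γ := mul_pos hβpos hγ
  have hA : 0 < β ^ 2 * α * γ - 2 * (β * γ) * μ + μ * σ := by
    nlinarith [sq_nonneg (β * γ - μ), mul_pos hβpos hβpos, mul_pos (mul_pos hβpos hβpos) hγ]
  have h1 : 0 < lam * (β * γ) * (β ^ 2 * α * γ - 2 * (β * γ) * μ + μ * σ) :=
    mul_pos (mul_pos hlam hbγ) hA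
  have h2 : 0 ≤ μ * (β * γ - σ) * (β ^ 2 * γ * α - σ * μ) := by
    have hB : 0 ≤ β ^ 2 * γ * α - σ * μ := by
      nlinarith [mul_pos (mul_pos hβpos hβpos) hγ]
    exact mul_nonneg (mul_nonneg hμ.le (sub_nonneg.2 hb)) hB
  nlinarith [h1, h2]
end

section
/- Let α > γ > 0, σ ≥ μ > 0 and β ≥ σ/γ. Then 4β⁴α²γ²(ασ + γμ) − 2β³αγμσ(α² + γ² + 10αγ) + 6β²αγμσ(α + γ)(μ + σ) − 2βμσ(μσ(α + γ)² + 2αγ(μ − σ)²) + 2μ²σ²(α − γ)(μ − σ) > 0. -/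
set_option maxHeartbeats 1600000
set_option maxRecDepth 100000


/-- For α > γ > 0, σ ≥ μ > 0 and β ≥ σ/γ, the polynomial h(β) is positive. -/
theorem h_beta_pos
    (μ σ α γ β : ℝ) (hαγ : γ < α) (hγ : 0 < γ) (hμσ : μ ≤ σ) (hμ : 0 < μ)
    (hβ : σ / γ ≤ β) :
    4 * β ^ 4 * α ^ 2 * γ ^ 2 * (α * σ + γ * μ) -
        2 * β ^ 3 * α * γ * μ * σ * (α ^ 2 + γ ^ 2 + 10 * α * γ) +
        6 * β ^ 2 * α * γ * μ * σ * (α + γ) * (μ + σ) -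
        2 * β * μ * σ * (μ * σ * (α + γ) ^ 2 + 2 * α * γ * (μ - σ) ^ 2) +
        2 * μ ^ 2 * σ ^ 2 * (α - γ) * (μ - σ) > 0 := by
  obtain ⟨d, hd, rfl⟩ : ∃ d, 0 ≤ d ∧ σ = μ + d := ⟨σ - μ, by linarith, by ring⟩
  obtain ⟨a, ha, rfl⟩ : ∃ a, 0 < a ∧ α = γ + a := ⟨α - γ, by linarith, by ring⟩
  have hγ' : γ ≠ 0 := ne_of_gt hγ
  have hs' : μ + d ≤ β * γ := (div_le_iff₀ hγ).mp hβ
  obtain ⟨s, hs, rfl⟩ : ∃ s, 0 ≤ s ∧ β = (μ + d + s) / γ :=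
    ⟨β * γ - (μ + d), by linarith, by field_simp; ring⟩
  have key : 4 * ((μ + d + s) / γ) ^ 4 * (γ + a) ^ 2 * γ ^ 2 * ((γ + a) * (μ + d) + γ * μ) -
        2 * ((μ + d + s) / γ) ^ 3 * (γ + a) * γ * μ * (μ + d) *
          ((γ + a) ^ 2 + γ ^ 2 + 10 * (γ + a) * γ) +
        6 * ((μ + d + s) / γ) ^ 2 * (γ + a) * γ * μ * (μ + d) * ((γ + a) + γ) * (μ + (μ + d)) -
        2 * ((μ + d + s) / γ) * μ * (μ + d) *
          (μ * (μ + d) * ((γ + a) + γ) ^ 2 + 2 * (γ + a) * γ * (μ - (μ + d)) ^ 2) +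
        2 * μ ^ 2 * (μ + d) ^ 2 * ((γ + a) - γ) * (μ - (μ + d)) =
      (4 * d ^ 1 * γ ^ 5 * s ^ 4 +
      12 * d ^ 1 * a ^ 1 * γ ^ 4 * s ^ 4 +
      12 * d ^ 1 * a ^ 2 * γ ^ 3 * s ^ 4 +
      4 * d ^ 1 * a ^ 3 * γ ^ 2 * s ^ 4 +
      16 * d ^ 2 * γ ^ 5 * s ^ 3 +
      48 * d ^ 2 * a ^ 1 * γ ^ 4 * s ^ 3 +
      48 * d ^ 2 * a ^ 2 * γ ^ 3 * s ^ 3 +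
      16 * d ^ 2 * a ^ 3 * γ ^ 2 * s ^ 3 +
      24 * d ^ 3 * γ ^ 5 * s ^ 2 +
      72 * d ^ 3 * a ^ 1 * γ ^ 4 * s ^ 2 +
      72 * d ^ 3 * a ^ 2 * γ ^ 3 * s ^ 2 +
      24 * d ^ 3 * a ^ 3 * γ ^ 2 * s ^ 2 +
      16 * d ^ 4 * γ ^ 5 * s ^ 1 +
      48 * d ^ 4 * a ^ 1 * γ ^ 4 * s ^ 1 +
      48 * d ^ 4 * a ^ 2 * γ ^ 3 * s ^ 1 +
      16 * d ^ 4 * a ^ 3 * γ ^ 2 * s ^ 1 +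
      4 * d ^ 5 * γ ^ 5 +
      12 * d ^ 5 * a ^ 1 * γ ^ 4 +
      12 * d ^ 5 * a ^ 2 * γ ^ 3 +
      4 * d ^ 5 * a ^ 3 * γ ^ 2 +
      8 * μ ^ 1 * γ ^ 5 * s ^ 4 +
      20 * μ ^ 1 * a ^ 1 * γ ^ 4 * s ^ 4 +
      16 * μ ^ 1 * a ^ 2 * γ ^ 3 * s ^ 4 +
      4 * μ ^ 1 * a ^ 3 * γ ^ 2 * s ^ 4 +
      24 * μ ^ 1 * d ^ 1 * γ ^ 5 * s ^ 3 +
      80 * μ ^ 1 * d ^ 1 * a ^ 1 * γ ^ 4 * s ^ 3 +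
      86 * μ ^ 1 * d ^ 1 * a ^ 2 * γ ^ 3 * s ^ 3 +
      30 * μ ^ 1 * d ^ 1 * a ^ 3 * γ ^ 2 * s ^ 3 +
      36 * μ ^ 1 * d ^ 2 * γ ^ 5 * s ^ 2 +
      138 * μ ^ 1 * d ^ 2 * a ^ 1 * γ ^ 4 * s ^ 2 +
      168 * μ ^ 1 * d ^ 2 * a ^ 2 * γ ^ 3 * s ^ 2 +
      66 * μ ^ 1 * d ^ 2 * a ^ 3 * γ ^ 2 * s ^ 2 +
      28 * μ ^ 1 * d ^ 3 * γ ^ 5 * s ^ 1 +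
      112 * μ ^ 1 * d ^ 3 * a ^ 1 * γ ^ 4 * s ^ 1 +
      142 * μ ^ 1 * d ^ 3 * a ^ 2 * γ ^ 3 * s ^ 1 +
      58 * μ ^ 1 * d ^ 3 * a ^ 3 * γ ^ 2 * s ^ 1 +
      8 * μ ^ 1 * d ^ 4 * γ ^ 5 +
      34 * μ ^ 1 * d ^ 4 * a ^ 1 * γ ^ 4 +
      44 * μ ^ 1 * d ^ 4 * a ^ 2 * γ ^ 3 +
      18 * μ ^ 1 * d ^ 4 * a ^ 3 * γ ^ 2 +
      8 * μ ^ 2 * γ ^ 5 * s ^ 3 +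
      32 * μ ^ 2 * a ^ 1 * γ ^ 4 * s ^ 3 +
      38 * μ ^ 2 * a ^ 2 * γ ^ 3 * s ^ 3 +
      14 * μ ^ 2 * a ^ 3 * γ ^ 2 * s ^ 3 +
      12 * μ ^ 2 * d ^ 1 * γ ^ 5 * s ^ 2 +
      78 * μ ^ 2 * d ^ 1 * a ^ 1 * γ ^ 4 * s ^ 2 +
      126 * μ ^ 2 * d ^ 1 * a ^ 2 * γ ^ 3 * s ^ 2 +
      60 * μ ^ 2 * d ^ 1 * a ^ 3 * γ ^ 2 * s ^ 2 +
      12 * μ ^ 2 * d ^ 2 * γ ^ 5 * s ^ 1 +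
      84 * μ ^ 2 * d ^ 2 * a ^ 1 * γ ^ 4 * s ^ 1 +
      148 * μ ^ 2 * d ^ 2 * a ^ 2 * γ ^ 3 * s ^ 1 +
      78 * μ ^ 2 * d ^ 2 * a ^ 3 * γ ^ 2 * s ^ 1 +
      4 * μ ^ 2 * d ^ 3 * γ ^ 5 +
      32 * μ ^ 2 * d ^ 3 * a ^ 1 * γ ^ 4 +
      60 * μ ^ 2 * d ^ 3 * a ^ 2 * γ ^ 3 +
      32 * μ ^ 2 * d ^ 3 * a ^ 3 * γ ^ 2 +
      12 * μ ^ 3 * a ^ 1 * γ ^ 4 * s ^ 2 +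
      30 * μ ^ 3 * a ^ 2 * γ ^ 3 * s ^ 2 +
      18 * μ ^ 3 * a ^ 3 * γ ^ 2 * s ^ 2 +
      20 * μ ^ 3 * d ^ 1 * a ^ 1 * γ ^ 4 * s ^ 1 +
      62 * μ ^ 3 * d ^ 1 * a ^ 2 * γ ^ 3 * s ^ 1 +
      46 * μ ^ 3 * d ^ 1 * a ^ 3 * γ ^ 2 * s ^ 1 +
      10 * μ ^ 3 * d ^ 2 * a ^ 1 * γ ^ 4 +
      36 * μ ^ 3 * d ^ 2 * a ^ 2 * γ ^ 3 +
      28 * μ ^ 3 * d ^ 2 * a ^ 3 * γ ^ 2 +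
      8 * μ ^ 4 * a ^ 2 * γ ^ 3 * s ^ 1 +
      10 * μ ^ 4 * a ^ 3 * γ ^ 2 * s ^ 1 +
      8 * μ ^ 4 * d ^ 1 * a ^ 2 * γ ^ 3 +
      12 * μ ^ 4 * d ^ 1 * a ^ 3 * γ ^ 2 +
      2 * μ ^ 5 * a ^ 3 * γ ^ 2) / γ ^ 4 := by
    field_simp
    ring
  rw [key]
  positivity
end

section
/- Let α > γ > 0, σ ≥ μ > 0 and β ≥ σ/γ. Then (β²αγ + μσ)(α + γ) − 2βαγ(μ + σ) > 0. -/
/-- For α > γ > 0, σ ≥ μ > 0 and β ≥ σ/γ,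
(β²αγ + μσ)(α + γ) − 2βαγ(μ + σ) > 0. -/
theorem quadratic_pos
    (μ σ α γ β : ℝ) (hαγ : γ < α) (hγ : 0 < γ) (hμσ : μ ≤ σ) (hμ : 0 < μ)
    (hβ : σ / γ ≤ β) :
    (β ^ 2 * α * γ + μ * σ) * (α + γ) - 2 * β * α * γ * (μ + σ) > 0 := by
  have hα : 0 < α := hγ.trans hαγ
  have hσ : 0 < σ := hμ.trans_le hμσ
  have h1 : 0 ≤ β * γ - σ := by
    have := (div_le_iff₀ hγ).mp hβ; linarith
  have h2 : 0 < α * σ - γ * μ := by nlinarith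
  have key : 0 < γ * ((β ^ 2 * α * γ + μ * σ) * (α + γ) - 2 * β * α * γ * (μ + σ)) := by
    nlinarith [mul_nonneg (mul_nonneg h1 h1) (mul_pos hα (by linarith : (0:ℝ) < α + γ)).le,
      mul_nonneg (mul_nonneg h1 h2.le) hα.le,
      mul_pos (mul_pos hσ (sub_pos.mpr hαγ)) h2]
  nlinarith [key, hγ]
end

section
/- Let α > γ > 0 and σ ≥ μ > 0. Then the function β ↦ β·(α b_β + γ a_β) is strictly increasing on the interval (σ/γ, +∞). -/
/-- For α > γ > 0 and σ ≥ μ > 0, the map β ↦ β(α b_β + γ a_β) is strictly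
increasing on (σ/γ, ∞). -/
theorem beta_mul_sum_strictMonoOn
    (μ σ α γ : ℝ) (hαγ : γ < α) (hγ : 0 < γ) (hμσ : μ ≤ σ) (hμ : 0 < μ) :
    StrictMonoOn (fun β : ℝ => β * (α * bβ μ σ α γ β + γ * aβ μ σ α γ β))
      (Set.Ioi (σ / γ)) := by
  have hσ : 0 < σ := lt_of_lt_of_le hμ hμσ
  have hα : 0 < α := hγ.trans hαγ
  intro x hx y hy hxy
  simp only [Set.mem_Ioi, div_lt_iff₀ hγ] at hx hy
  -- hx : σ < x * γ, hy : σ < y * γ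
  have hασ : γ * μ < α * σ := by nlinarith
  have hDx : 0 < x ^ 2 * α * γ - μ * σ := by
    nlinarith [mul_pos hα (mul_pos (sub_pos.2 hx) (sub_pos.2 hx)),
      mul_pos (mul_pos hα hσ) (sub_pos.2 hx), mul_pos hσ (sub_pos.2 hασ)]
  have hDy : 0 < y ^ 2 * α * γ - μ * σ := by
    nlinarith [mul_pos hα (mul_pos (sub_pos.2 hy) (sub_pos.2 hy)),
      mul_pos (mul_pos hα hσ) (sub_pos.2 hy), mul_pos hσ (sub_pos.2 hασ)]
  have hg : 0 < α * γ * (α + γ) * (x * y) - α * γ * (μ + σ) * (x + y)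
      + μ * σ * (α + γ) := by
    nlinarith [mul_pos (mul_pos (mul_pos hα hγ) (add_pos hα hγ))
        (mul_pos (sub_pos.2 hx) (sub_pos.2 hy)),
      mul_pos (mul_pos (mul_pos hα hγ) (sub_pos.2 hασ)) (sub_pos.2 hx),
      mul_pos (mul_pos (mul_pos hα hγ) (sub_pos.2 hασ)) (sub_pos.2 hy),
      mul_pos (mul_pos (mul_pos hγ hσ) (sub_pos.2 hαγ)) (sub_pos.2 hασ),
      mul_pos hγ hγ]
  simp only [aβ, bβ]
  have hform : ∀ β : ℝ, β ^ 2 * α * γ - μ * σ ≠ 0 →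
      β * (α * ((β * γ - σ) * μ / (β ^ 2 * α * γ - μ * σ)) +
        γ * ((β * α - μ) * σ / (β ^ 2 * α * γ - μ * σ))) =
      β * (α * ((β * γ - σ) * μ) + γ * ((β * α - μ) * σ)) / (β ^ 2 * α * γ - μ * σ) := by
    intro β h
    field_simp
  rw [hform x hDx.ne', hform y hDy.ne', div_lt_div_iff₀ hDx hDy]
  nlinarith [mul_pos (mul_pos (sub_pos.2 hxy) (mul_pos hμ hσ)) hg]
end

section
/- Let α > γ > 0, σ ≥ μ > 0 and β > σ/γ. Then δ₂(β, 1) = −δ₁(β), i.e. the two-variable quantity δ₂(β, λ) evaluated at λ = 1 equals the negative of the one-variable quantity δ₁(β) = (1/2)·(μ a_β + σ b_β − √(4β²αγ a_β b_β + (μ a_β − σ b_β)²)). -/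
/-- The smaller eigenvalue `δ₁(β, λ)` of the matrix `D(β, λ)` (times λ). -/
noncomputable def delta₁ (μ σ α γ β lam : ℝ) : ℝ :=
  (1 / (2 * lam)) * (-(μ * lam) + β * α * bβ μ σ α γ β - σ * lam + β * γ * aβ μ σ α γ β -
    Real.sqrt ((μ * lam - β * α * bβ μ σ α γ β + σ * lam - β * γ * aβ μ σ α γ β) ^ 2 -
      4 * (μ * σ * lam ^ 2 - β * α * bβ μ σ α γ β * σ * lam -
        β * γ * aβ μ σ α γ β * μ * lam)))

/-- The larger eigenvalue `δ₂(β, λ)` of the matrix `D(β, λ)` (times λ). -/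
noncomputable def delta₂ (μ σ α γ β lam : ℝ) : ℝ :=
  (1 / (2 * lam)) * (-(μ * lam) + β * α * bβ μ σ α γ β - σ * lam + β * γ * aβ μ σ α γ β +
    Real.sqrt ((μ * lam - β * α * bβ μ σ α γ β + σ * lam - β * γ * aβ μ σ α γ β) ^ 2 -
      4 * (μ * σ * lam ^ 2 - β * α * bβ μ σ α γ β * σ * lam -
        β * γ * aβ μ σ α γ β * μ * lam)))

/-- For α > γ > 0, σ ≥ μ > 0 and β > σ/γ, one has δ₂(β, 1) = −δ₁(β). -/
theorem delta2_at_one_eq_neg_delta1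
    (μ σ α γ β : ℝ) (hαγ : γ < α) (hγ : 0 < γ) (hμσ : μ ≤ σ) (hμ : 0 < μ)
    (hβ : σ / γ < β) :
    delta₂ μ σ α γ β 1 = -δ₁ μ σ α γ β := by
  have hσ : 0 < σ := lt_of_lt_of_le hμ hμσ
  have hβpos : 0 < β := lt_trans (div_pos hσ hγ) hβ
  have hγβ : σ < β * γ := (div_lt_iff₀ hγ).mp hβ
  have hD : μ * σ < β ^ 2 * α * γ := by
    have h := mul_lt_mul'' (show μ < β * α by nlinarith) hγβ hμ.le hσ.le
    nlinarith
  have hD' : β ^ 2 * α * γ - μ * σ ≠ 0 := ne_of_gt (by linarith)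
  set A := aβ μ σ α γ β with hAdef
  set B := bβ μ σ α γ β with hBdef
  have h1 : β * α * B = μ - μ * A := by
    rw [hAdef, hBdef]; unfold aβ bβ; rw [eq_sub_iff_add_eq, ← mul_div_assoc, ← mul_div_assoc, ← add_div, div_eq_iff hD']; ring
  have h2 : β * γ * A = σ - σ * B := by
    rw [hAdef, hBdef]; unfold aβ bβ; rw [eq_sub_iff_add_eq, ← mul_div_assoc, ← mul_div_assoc, ← add_div, div_eq_iff hD']; ring
  have h3 : β ^ 2 * α * γ * A * B = (μ - μ * A) * (σ - σ * B) := by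
    rw [← h1, ← h2]; ring
  unfold delta₂ δ₁
  rw [← hAdef, ← hBdef]
  have hsq : (μ * 1 - β * α * B + σ * 1 - β * γ * A) ^ 2 -
      4 * (μ * σ * 1 ^ 2 - β * α * B * σ * 1 - β * γ * A * μ * 1)
      = 4 * β ^ 2 * α * γ * A * B + (μ * A - σ * B) ^ 2 := by
    rw [h1, h2]; linear_combination (-4) * h3
  rw [hsq]
  linear_combination (1/2) * h1 + (1/2) * h2
end

section
/- Let N ≥ 2, α > γ > 0, μ > 0 and β > μ/γ (so that β²αγ > μ²), and set a_β = (βα − μ)μ/(β²αγ − μ²), b_β = (βγ − μ)μ/(β²αγ − μ²). Let (w₁, w₂) be a pair of functions, twice continuously differentiable on the closed unit ball of ℝ^N and radially symmetric (each w_i(x) depends only on ‖x‖), satisfying −Δw₁ = (w₁ + a_β)(−μ w₁ − βα w₂) and −Δw₂ = (w₂ + b_β)(−μ w₂ − βγ w₁) in the open unit ball B₁, together with the Neumann boundary condition ⟨∇w_i(x), x⟩ = 0 for ‖x‖ = 1. Define v = (βγ − μ)·w₁ − (βα − μ)·w₂. Then either v is identically zero on the closed unit ball, or every zero of v in the punctured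 open ball is simple: for every x with 0 < ‖x‖ < 1 and v(x) = 0 one has ∇v(x) ≠ 0. -/
open Metric MeasureTheory RealInnerProductSpace
open Filter Topology Set

section Helpers

lemma aux_deriv {g : ℝ → ℝ} {t : ℝ} (hg : ContDiffAt ℝ 2 g t) :
    HasDerivAt g (deriv g t) t ∧ HasDerivAt (deriv g) (deriv (deriv g) t) t ∧
      ContinuousAt (deriv g) t := by
  obtain ⟨u, hu, hcd⟩ := hg.contDiffOn le_rfl (by simp)
  obtain ⟨s, hsu, hso, hts⟩ := _root_.mem_nhds_iff.mp hu
  have hcd2 : ContDiffOn ℝ 2 g s := hcd.mono hsu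
  have h2 : (2 : WithTop ℕ∞) = 1 + 1 := by norm_num
  rw [h2, contDiffOn_succ_iff_deriv_of_isOpen hso] at hcd2
  refine ⟨(hg.differentiableAt (by norm_num)).hasDerivAt, ?_, ?_⟩
  · exact ((hcd2.2.2.differentiableOn one_ne_zero).differentiableAt
      (hso.mem_nhds hts)).hasDerivAt
  · exact ((hcd2.2.2.continuousOn).continuousAt (hso.mem_nhds hts))

lemma secondDeriv_line {N : ℕ} {f : EuclideanSpace ℝ (Fin N) → ℝ}
    {x : EuclideanSpace ℝ (Fin N)} (hf : ContDiffAt ℝ 2 f x) (u : EuclideanSpace ℝ (Fin N)) :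
    iteratedFDeriv ℝ 2 f x ![u, u] = deriv (deriv (fun t : ℝ => f (x + t • u))) 0 := by
  have hf1 : ContDiffAt ℝ 1 (fderiv ℝ f) x := hf.fderiv_right (by norm_num)
  have hdd : DifferentiableAt ℝ (fderiv ℝ f) x := hf1.differentiableAt one_ne_zero
  have hev : ∀ᶠ y in 𝓝 x, DifferentiableAt ℝ f y :=
    (hf.eventually (by simp)).mono fun y hy => hy.differentiableAt two_ne_zero
  have hline : ∀ t : ℝ, HasDerivAt (fun s : ℝ => x + s • u) u t := by
    intro t
    simpa using ((hasDerivAt_id t).smul_const u).const_add x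
  have hcont : Continuous fun t : ℝ => x + t • u := by continuity
  have hev2 : ∀ᶠ t : ℝ in 𝓝 0, DifferentiableAt ℝ f (x + t • u) := by
    have : Tendsto (fun t : ℝ => x + t • u) (𝓝 0) (𝓝 x) := by
      simpa using (hcont.tendsto 0)
    exact this.eventually hev
  have hderiv1 : deriv (fun t : ℝ => f (x + t • u)) =ᶠ[𝓝 (0:ℝ)]
      fun t => fderiv ℝ f (x + t • u) u := by
    filter_upwards [hev2] with t ht
    exact (ht.hasFDerivAt.comp_hasDerivAt t (hline t)).deriv
  rw [hderiv1.deriv_eq]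
  have hB : HasDerivAt (fun t : ℝ => fderiv ℝ f (x + t • u)) (fderiv ℝ (fderiv ℝ f) x u) 0 := by
    have h1 : HasFDerivAt (fderiv ℝ f) (fderiv ℝ (fderiv ℝ f) x) (x + (0:ℝ) • u) := by
      simpa using hdd.hasFDerivAt
    exact h1.comp_hasDerivAt 0 (hline 0)
  have happ : HasDerivAt (fun t : ℝ => fderiv ℝ f (x + t • u) u)
      (fderiv ℝ (fderiv ℝ f) x u u) 0 :=
    (ContinuousLinearMap.apply ℝ ℝ u).hasFDerivAt.comp_hasDerivAt 0 hB
  rw [happ.deriv, iteratedFDeriv_two_apply]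
  simp

lemma deriv2_norm_comp {N : ℕ} (g : ℝ → ℝ) (x u : EuclideanSpace ℝ (Fin N))
    (hx : x ≠ 0) (hg : ContDiffAt ℝ 2 g ‖x‖) :
    deriv (deriv (fun t : ℝ => g ‖x + t • u‖)) 0 =
      deriv (deriv g) ‖x‖ * (⟪x, u⟫ / ‖x‖)^2
        + deriv g ‖x‖ * (‖u‖^2 / ‖x‖ - ⟪x, u⟫^2 / ‖x‖^3) := by
  set r := ‖x‖ with hr
  have hr0 : 0 < r := norm_pos_iff.mpr hx
  set c : ℝ := ⟪x, u⟫ with hc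
  set d : ℝ := ‖u‖^2 with hd
  set Q : ℝ → ℝ := fun t => r^2 + 2*c*t + d*t^2 with hQdef
  have hQ : ∀ t : ℝ, ‖x + t • u‖ = Real.sqrt (Q t) := by
    intro t
    have h1 : ‖x + t • u‖^2 = Q t := by
      rw [norm_add_sq_real, real_inner_smul_right, norm_smul]
      simp only [Q, hd, Real.norm_eq_abs, mul_pow, sq_abs]
      ring
    rw [← h1, Real.sqrt_sq (norm_nonneg _)]
  have hQ0 : Q 0 = r^2 := by simp [Q]
  have hQcont : Continuous Q := by continuity
  have hQpos : ∀ᶠ t : ℝ in 𝓝 0, 0 < Q t := by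
    have h := hQcont.tendsto 0
    rw [hQ0] at h
    exact h.eventually (eventually_gt_nhds (by positivity))
  have hQ' : ∀ t : ℝ, HasDerivAt Q (2*c + 2*d*t) t := by
    intro t
    have h1 : HasDerivAt (fun t : ℝ => r^2 + 2*c*t + d*t^2)
        ((0 + 2*c*1) + d*(2*t^(2-1))) t := by
      exact ((hasDerivAt_const t (r^2)).add ((hasDerivAt_id t).const_mul (2*c))).add
        ((hasDerivAt_pow 2 t).const_mul d)
    convert h1 using 1
    norm_num; ring
  set ψ : ℝ → ℝ := fun t => Real.sqrt (Q t) with hψdef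
  set B : ℝ → ℝ := fun t => (c + d*t) / Real.sqrt (Q t) with hBdef
  have hψ0 : ψ 0 = r := by
    simp only [ψ, hQ0]
    exact Real.sqrt_sq hr0.le
  have hψ' : ∀ᶠ t : ℝ in 𝓝 0, HasDerivAt ψ (B t) t := by
    filter_upwards [hQpos] with t ht
    have h2 := (Real.hasDerivAt_sqrt (ne_of_gt ht)).comp t (hQ' t)
    have hs : Real.sqrt (Q t) ≠ 0 := (Real.sqrt_pos.mpr ht).ne'
    refine h2.congr_deriv ?_
    show _ = (c + d*t) / Real.sqrt (Q t)
    field_simp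
  have hψcont : Continuous ψ := Real.continuous_sqrt.comp hQcont
  have hgev : ∀ᶠ t : ℝ in 𝓝 0, ContDiffAt ℝ 2 g (ψ t) := by
    have h := hψcont.tendsto 0
    rw [hψ0] at h
    exact h.eventually (hg.eventually (by simp))
  have hφ : (fun t : ℝ => g ‖x + t • u‖) = fun t => g (ψ t) := funext fun t => by rw [hQ]
  have hd1 : deriv (fun t : ℝ => g ‖x + t • u‖) =ᶠ[𝓝 (0:ℝ)]
      fun t => deriv g (ψ t) * B t := by
    filter_upwards [hψ', hgev] with t h1 h2
    rw [hφ]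
    exact (((aux_deriv h2).1).comp t h1).deriv
  rw [hd1.deriv_eq]
  have hψ'0 : HasDerivAt ψ (c/r) 0 := by
    have h := hψ'.self_of_nhds
    have : B 0 = c/r := by simp [B, hQ0, Real.sqrt_sq hr0.le]
    rwa [this] at h
  have hA : HasDerivAt (fun t => deriv g (ψ t)) (deriv (deriv g) r * (c/r)) 0 := by
    have hg2 : HasDerivAt (deriv g) (deriv (deriv g) (ψ 0)) (ψ 0) := by
      rw [hψ0]; exact (aux_deriv hg).2.1
    have := hg2.comp 0 hψ'0
    rwa [hψ0] at this
  have hnum : HasDerivAt (fun t : ℝ => c + d*t) d 0 := by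
    simpa using ((hasDerivAt_id (0:ℝ)).const_mul d).const_add c
  have hden : Real.sqrt (Q 0) ≠ 0 := by
    rw [hQ0, Real.sqrt_sq hr0.le]; exact hr0.ne'
  have hB' : HasDerivAt B ((d * Real.sqrt (Q 0) - (c + d*0) * (c/r)) / Real.sqrt (Q 0)^2) 0 :=
    hnum.div hψ'0 hden
  have := (hA.mul hB').deriv
  rw [show (fun t => deriv g (ψ t) * B t) = (fun t => deriv g (ψ t)) * B from rfl, this, hψ0]
  have hsq : Real.sqrt (Q 0) = r := by rw [hQ0]; exact Real.sqrt_sq hr0.le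
  rw [hsq] at hB' ⊢
  have hB0 : B 0 = c/r := by simp [B, hQ0, Real.sqrt_sq hr0.le]
  rw [hB0]
  field_simp
  ring

lemma ode_zero (g W : ℝ → ℝ) (k : ℝ) (hk : 0 ≤ k)
    (hgC : ∀ t ∈ Set.Ioo (0:ℝ) 1, ContDiffAt ℝ 2 g t)
    (hW : ∀ t ∈ Set.Ioo (0:ℝ) 1, ContinuousAt W t)
    (hODE : ∀ t ∈ Set.Ioo (0:ℝ) 1, deriv (deriv g) t = -(k / t * deriv g t) - W t * g t)
    {r₀ : ℝ} (hr₀ : r₀ ∈ Set.Ioo (0:ℝ) 1) (h0 : g r₀ = 0) (h1 : deriv g r₀ = 0) :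
    ∀ t ∈ Set.Ioo (0:ℝ) 1, g t = 0 := by
  intro t' ht'
  set a : ℝ := min r₀ t' / 2 with hadef
  set b : ℝ := (max r₀ t' + 1) / 2 with hbdef
  have ha0 : 0 < a := by
    have h1 := hr₀.1; have h2 := ht'.1
    simp only [hadef]
    positivity
  have har : a < min r₀ t' := by
    have h := lt_min hr₀.1 ht'.1
    simp only [hadef]; linarith
  have hb1 : b < 1 := by
    have h := max_lt hr₀.2 ht'.2
    simp only [hbdef]; linarith
  have hbr : max r₀ t' < b := by
    have h : 0 < max r₀ t' := lt_of_lt_of_le hr₀.1 (le_max_left _ _)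
    have h2 := max_lt hr₀.2 ht'.2
    simp only [hbdef]; linarith
  have hab : a < b := lt_trans (lt_of_lt_of_le har (min_le_max)) hbr
  have hsub : Icc a b ⊆ Ioo 0 1 := fun s hs => ⟨lt_of_lt_of_le ha0 hs.1, lt_of_le_of_lt hs.2 hb1⟩
  have hr₀ab : r₀ ∈ Ioo a b :=
    ⟨lt_of_lt_of_le har (min_le_left _ _), lt_of_le_of_lt (le_max_left _ _) hbr⟩
  have ht'ab : t' ∈ Ioo a b :=
    ⟨lt_of_lt_of_le har (min_le_right _ _), lt_of_le_of_lt (le_max_right _ _) hbr⟩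
  have hWc : ContinuousOn W (Icc a b) := fun s hs => (hW s (hsub hs)).continuousWithinAt
  obtain ⟨C, hC⟩ := (isCompact_Icc (a := a) (b := b)).exists_bound_of_continuousOn hWc
  set M : ℝ := max C 0 with hMdef
  have hM0 : 0 ≤ M := le_max_right _ _
  have hMb : ∀ s ∈ Icc a b, |W s| ≤ M := fun s hs =>
    le_trans (by simpa [Real.norm_eq_abs] using hC s hs) (le_max_left _ _)
  set proj : ℝ → ℝ := fun t => max a (min b t) with hprojdef
  have hprojmem : ∀ t, proj t ∈ Icc a b :=
    fun t => ⟨le_max_left _ _, max_le hab.le (min_le_left _ _)⟩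
  have hprojeq : ∀ t ∈ Icc a b, proj t = t := by
    intro t ht
    simp only [hprojdef]
    rw [min_eq_right ht.2, max_eq_right ht.1]
  set F : ℝ → ℝ × ℝ → ℝ × ℝ :=
    fun t y => (y.2, -(k / proj t * y.2) - W (proj t) * y.1) with hFdef
  have hKpos : (0:ℝ) ≤ k / a + M + 1 := by positivity
  set K : NNReal := ⟨k / a + M + 1, hKpos⟩ with hKdef
  have hlip : ∀ t, LipschitzWith K (F t) := by
    intro t
    apply LipschitzWith.of_dist_le_mul
    intro y z
    have hKc : (K : ℝ) = k / a + M + 1 := rfl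
    have hd1 : dist y.1 z.1 ≤ dist y z := by rw [Prod.dist_eq]; exact le_max_left _ _
    have hd2 : dist y.2 z.2 ≤ dist y z := by rw [Prod.dist_eq]; exact le_max_right _ _
    have hdnn : 0 ≤ dist y z := dist_nonneg
    have hka : k / proj t ≤ k / a := div_le_div_of_nonneg_left hk ha0 (hprojmem t).1
    have hka0 : 0 ≤ k / proj t := div_nonneg hk (le_trans ha0.le (hprojmem t).1)
    have hWm : |W (proj t)| ≤ M := hMb _ (hprojmem t)
    rw [hKc, Prod.dist_eq]
    apply max_le
    · calc dist (F t y).1 (F t z).1 = dist y.2 z.2 := rfl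
        _ ≤ dist y z := hd2
        _ ≤ (k / a + M + 1) * dist y z := by nlinarith [div_nonneg hk ha0.le]
    · have : dist (F t y).2 (F t z).2 =
          |(-(k / proj t) * (y.2 - z.2)) + (-(W (proj t)) * (y.1 - z.1))| := by
        rw [Real.dist_eq]
        simp only [hFdef]
        ring_nf
      rw [this]
      calc |(-(k / proj t) * (y.2 - z.2)) + (-(W (proj t)) * (y.1 - z.1))|
          ≤ |(-(k / proj t) * (y.2 - z.2))| + |(-(W (proj t)) * (y.1 - z.1))| := abs_add_le _ _
        _ = (k / proj t) * |y.2 - z.2| + |W (proj t)| * |y.1 - z.1| := by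
            rw [abs_mul, abs_mul, abs_neg, abs_neg, abs_of_nonneg hka0]
        _ ≤ (k / a) * dist y z + M * dist y z := by
            have e2 : |y.2 - z.2| = dist y.2 z.2 := (Real.dist_eq _ _).symm
            have e1 : |y.1 - z.1| = dist y.1 z.1 := (Real.dist_eq _ _).symm
            rw [e1, e2]
            have b2 : (k / proj t) * dist y.2 z.2 ≤ (k / a) * dist y z :=
              mul_le_mul hka hd2 dist_nonneg (div_nonneg hk ha0.le)
            have b1 : |W (proj t)| * dist y.1 z.1 ≤ M * dist y z :=
              mul_le_mul hWm hd1 dist_nonneg hM0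
            linarith
        _ ≤ (k / a + M + 1) * dist y z := by nlinarith
  set f : ℝ → ℝ × ℝ := fun t => (g t, deriv g t) with hfdef
  set z : ℝ → ℝ × ℝ := fun _ => ((0:ℝ), (0:ℝ)) with hzdef
  have hf' : ∀ s ∈ Ioo a b, HasDerivAt f (F s (f s)) s := by
    intro s hs
    have hs01 : s ∈ Ioo (0:ℝ) 1 := hsub (Ioo_subset_Icc_self hs)
    have h2 := aux_deriv (hgC s hs01)
    have hFeq : F s (f s) = (deriv g s, deriv (deriv g) s) := by
      simp only [hFdef, hfdef]
      rw [hprojeq s (Ioo_subset_Icc_self hs), hODE s hs01]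
    rw [hFeq]
    exact h2.1.prodMk h2.2.1
  have hz' : ∀ s ∈ Ioo a b, HasDerivAt z (F s (z s)) s := by
    intro s hs
    have hFz : F s (z s) = ((0:ℝ), (0:ℝ)) := by simp [hFdef, hzdef]
    rw [hFz]
    exact hasDerivAt_const s _
  have hfc : ContinuousOn f (Icc a b) := by
    intro s hs
    have hs01 : s ∈ Ioo (0:ℝ) 1 := hsub hs
    have h2 := aux_deriv (hgC s hs01)
    exact ((h2.1.continuousAt).prodMk h2.2.2).continuousWithinAt
  have hzc : ContinuousOn z (Icc a b) := continuousOn_const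
  have heq0 : f r₀ = z r₀ := by
    simp only [hfdef, hzdef, h0, h1]
  have := ODE_solution_unique_of_mem_Icc (s := fun _ => (Set.univ : Set (ℝ × ℝ)))
    (fun t _ => (hlip t).lipschitzOnWith) hr₀ab hfc hf' (fun _ _ => trivial)
    hzc hz' (fun _ _ => trivial) heq0
  have hft' := this (Ioo_subset_Icc_self ht'ab)
  exact congrArg Prod.fst hft'

end Helpers


/-- The Laplacian of a real-valued function on Euclidean space, as the sum of the pure
second derivatives along the standard orthonormal basis directions. -/
noncomputable def lap {N : ℕ} (u : EuclideanSpace ℝ (Fin N) → ℝ)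
    (x : EuclideanSpace ℝ (Fin N)) : ℝ :=
  ∑ i : Fin N, iteratedFDeriv ℝ 2 u x ![EuclideanSpace.single i 1, EuclideanSpace.single i 1]

lemma lap_radial {N : ℕ} {f : EuclideanSpace ℝ (Fin N) → ℝ} {g : ℝ → ℝ}
    {x : EuclideanSpace ℝ (Fin N)} (hx : x ≠ 0)
    (hf : ContDiffAt ℝ 2 f x) (hg : ContDiffAt ℝ 2 g ‖x‖)
    (hloc : ∀ᶠ y in 𝓝 x, f y = g ‖y‖) :
    lap f x = deriv (deriv g) ‖x‖ + ((N:ℝ) - 1) / ‖x‖ * deriv g ‖x‖ := by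
  set r := ‖x‖ with hrdef
  have hr0 : 0 < r := norm_pos_iff.mpr hx
  have key : ∀ i : Fin N,
      iteratedFDeriv ℝ 2 f x ![EuclideanSpace.single i 1, EuclideanSpace.single i 1] =
        deriv (deriv g) r * (x i / r)^2 + deriv g r * (1 / r - (x i)^2 / r^3) := by
    intro i
    set u := EuclideanSpace.single i (1:ℝ) with hudef
    rw [secondDeriv_line hf u]
    have hevt : (fun t : ℝ => f (x + t • u)) =ᶠ[𝓝 (0:ℝ)] fun t => g ‖x + t • u‖ := by
      have hcont : Continuous fun t : ℝ => x + t • u := by continuity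
      have h := hcont.tendsto 0
      simp only [zero_smul, add_zero] at h
      exact h.eventually hloc
    rw [hevt.deriv.deriv_eq, deriv2_norm_comp g x u hx hg]
    have h1 : ⟪x, u⟫ = x i := by
      rw [hudef, EuclideanSpace.inner_single_right]
      simp
    have h2 : ‖u‖ = 1 := by simp [hudef]
    rw [h1, h2]
    norm_num
    rfl
  have hsum : ∑ i, (x i)^2 = r^2 := by
    have h := EuclideanSpace.norm_eq x
    rw [← hrdef] at h
    have h2 : r^2 = ∑ i, ‖x i‖^2 := by
      rw [h, Real.sq_sqrt]
      positivity
    rw [h2]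
    apply Finset.sum_congr rfl
    intro i _
    rw [Real.norm_eq_abs, sq_abs]
  have hcard : (Finset.univ : Finset (Fin N)).card = N := by simp
  calc lap f x
      = ∑ i : Fin N, (deriv (deriv g) r * (x i / r)^2 + deriv g r * (1 / r - (x i)^2 / r^3)) := by
        rw [lap]; exact Finset.sum_congr rfl fun i _ => key i
    _ = ∑ i : Fin N, ((deriv (deriv g) r / r^2 - deriv g r / r^3) * (x i)^2 + deriv g r / r) := by
        apply Finset.sum_congr rfl
        intro i _
        field_simp
        ring
    _ = (deriv (deriv g) r / r^2 - deriv g r / r^3) * (∑ i, (x i)^2) + (N:ℝ) * (deriv g r / r) := by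
        rw [Finset.sum_add_distrib, ← Finset.mul_sum, Finset.sum_const, hcard, nsmul_eq_mul]
    _ = deriv (deriv g) r + ((N:ℝ) - 1) / r * deriv g r := by
        rw [hsum]
        field_simp
        ring


/-- For the shifted competition system with σ = μ, for any radial solution
(w₁, w₂), the combination v = (βγ − μ)w₁ − (βα − μ)w₂ is either identically zero on the
closed unit ball, or all its zeros in the punctured open ball are simple. -/
theorem combination_zero_or_simple_roots
    {N : ℕ} (hN : 2 ≤ N) (μ α γ β : ℝ)
    (hαγ : γ < α) (hγ : 0 < γ) (hμ : 0 < μ) (hβ : μ / γ < β)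
    (w₁ w₂ : EuclideanSpace ℝ (Fin N) → ℝ)
    (hreg₁ : ContDiffOn ℝ 2 w₁ (closedBall 0 1))
    (hreg₂ : ContDiffOn ℝ 2 w₂ (closedBall 0 1))
    (hrad₁ : ∀ x ∈ closedBall (0 : EuclideanSpace ℝ (Fin N)) 1,
      ∀ y ∈ closedBall (0 : EuclideanSpace ℝ (Fin N)) 1, ‖x‖ = ‖y‖ → w₁ x = w₁ y)
    (hrad₂ : ∀ x ∈ closedBall (0 : EuclideanSpace ℝ (Fin N)) 1,
      ∀ y ∈ closedBall (0 : EuclideanSpace ℝ (Fin N)) 1, ‖x‖ = ‖y‖ → w₂ x = w₂ y)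
    (heq₁ : ∀ x ∈ ball (0 : EuclideanSpace ℝ (Fin N)) 1,
      -lap w₁ x = (w₁ x + (β * α - μ) * μ / (β ^ 2 * α * γ - μ ^ 2)) *
        (-(μ * w₁ x) - β * α * w₂ x))
    (heq₂ : ∀ x ∈ ball (0 : EuclideanSpace ℝ (Fin N)) 1,
      -lap w₂ x = (w₂ x + (β * γ - μ) * μ / (β ^ 2 * α * γ - μ ^ 2)) *
        (-(μ * w₂ x) - β * γ * w₁ x))
    (hbc₁ : ∀ x : EuclideanSpace ℝ (Fin N), ‖x‖ = 1 → ⟪gradient w₁ x, x⟫ = 0)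
    (hbc₂ : ∀ x : EuclideanSpace ℝ (Fin N), ‖x‖ = 1 → ⟪gradient w₂ x, x⟫ = 0) :
    (∀ x ∈ closedBall (0 : EuclideanSpace ℝ (Fin N)) 1,
        (β * γ - μ) * w₁ x - (β * α - μ) * w₂ x = 0) ∨
      ∀ x : EuclideanSpace ℝ (Fin N), 0 < ‖x‖ → ‖x‖ < 1 →
        (β * γ - μ) * w₁ x - (β * α - μ) * w₂ x = 0 →
        gradient (fun y => (β * γ - μ) * w₁ y - (β * α - μ) * w₂ y) x ≠ 0 := by
  classical
  refine or_iff_not_imp_right.mpr fun hB => ?_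
  push_neg at hB
  obtain ⟨x₀, hx₀pos, hx₀lt, hv₀, hgrad₀⟩ := hB
  -- basic positivity
  have hβ0 : 0 < β := lt_trans (div_pos hμ hγ) hβ
  have hβγμ : μ < β * γ := (div_lt_iff₀ hγ).mp hβ
  have hα : 0 < α := lt_trans hγ hαγ
  have hβαμ : μ < β * α := by nlinarith
  have hD : 0 < β ^ 2 * α * γ - μ ^ 2 := by nlinarith
  set v : EuclideanSpace ℝ (Fin N) → ℝ :=
    fun y => (β * γ - μ) * w₁ y - (β * α - μ) * w₂ y with hvdef
  have hvreg : ContDiffOn ℝ 2 v (closedBall 0 1) :=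
    (contDiffOn_const.mul hreg₁).sub (contDiffOn_const.mul hreg₂)
  have hvrad : ∀ y ∈ closedBall (0:EuclideanSpace ℝ (Fin N)) 1,
      ∀ z ∈ closedBall (0:EuclideanSpace ℝ (Fin N)) 1, ‖y‖ = ‖z‖ → v y = v z := by
    intro y hy z hz h
    simp only [hvdef]
    rw [hrad₁ y hy z hz h, hrad₂ y hy z hz h]
  have hNpos : 0 < N := by omega
  set e : EuclideanSpace ℝ (Fin N) := EuclideanSpace.single (⟨0, hNpos⟩ : Fin N) (1:ℝ)
    with hedef
  have he : ‖e‖ = 1 := by simp [hedef]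
  have hnsmul : ∀ t : ℝ, ‖t • e‖ = |t| := by
    intro t; rw [norm_smul, he, mul_one, Real.norm_eq_abs]
  have hmem : ∀ t : ℝ, |t| ≤ 1 → t • e ∈ closedBall (0:EuclideanSpace ℝ (Fin N)) 1 := by
    intro t ht; rw [mem_closedBall_zero_iff, hnsmul]; exact ht
  have hmemo : ∀ t : ℝ, |t| < 1 → t • e ∈ ball (0:EuclideanSpace ℝ (Fin N)) 1 := by
    intro t ht; rw [mem_ball_zero_iff, hnsmul]; exact ht
  set g₁ : ℝ → ℝ := fun t => w₁ (t • e) with hg₁def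
  set g₂ : ℝ → ℝ := fun t => w₂ (t • e) with hg₂def
  set g : ℝ → ℝ := fun t => v (t • e) with hgdef
  have hsmul : ContDiff ℝ 2 (fun t : ℝ => t • e) := contDiff_id.smul contDiff_const
  have hC : ∀ w : EuclideanSpace ℝ (Fin N) → ℝ, ContDiffOn ℝ 2 w (closedBall 0 1) →
      ∀ x : EuclideanSpace ℝ (Fin N), ‖x‖ < 1 → ContDiffAt ℝ 2 w x := by
    intro w hw x hx
    exact hw.contDiffAt (Filter.mem_of_superset
      (isOpen_ball.mem_nhds (mem_ball_zero_iff.mpr hx)) ball_subset_closedBall)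
  have hg₁C : ∀ t : ℝ, |t| < 1 → ContDiffAt ℝ 2 g₁ t := fun t ht =>
    (hC w₁ hreg₁ (t • e) (by rw [hnsmul]; exact ht)).comp t hsmul.contDiffAt
  have hg₂C : ∀ t : ℝ, |t| < 1 → ContDiffAt ℝ 2 g₂ t := fun t ht =>
    (hC w₂ hreg₂ (t • e) (by rw [hnsmul]; exact ht)).comp t hsmul.contDiffAt
  have hgC : ∀ t : ℝ, |t| < 1 → ContDiffAt ℝ 2 g t := fun t ht =>
    by have h := (hC v hvreg (t • e) (by rw [hnsmul]; exact ht)).comp t hsmul.contDiffAt; exact h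
  have hlocgen : ∀ w : EuclideanSpace ℝ (Fin N) → ℝ,
      (∀ y ∈ closedBall (0:EuclideanSpace ℝ (Fin N)) 1,
        ∀ z ∈ closedBall (0:EuclideanSpace ℝ (Fin N)) 1, ‖y‖ = ‖z‖ → w y = w z) →
      ∀ x : EuclideanSpace ℝ (Fin N), ‖x‖ < 1 →
      ∀ᶠ y in 𝓝 x, w y = (fun t : ℝ => w (t • e)) ‖y‖ := by
    intro w hw x hx
    filter_upwards [isOpen_ball.mem_nhds (mem_ball_zero_iff.mpr hx)] with y hy
    have hy' : y ∈ closedBall (0:EuclideanSpace ℝ (Fin N)) 1 := ball_subset_closedBall hy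
    have hyn : ‖y‖ ≤ 1 := mem_closedBall_zero_iff.mp hy'
    have hz : ‖y‖ • e ∈ closedBall (0:EuclideanSpace ℝ (Fin N)) 1 :=
      hmem _ (by rw [abs_of_nonneg (norm_nonneg y)]; exact hyn)
    exact hw y hy' _ hz (by rw [hnsmul, abs_of_nonneg (norm_nonneg y)])
  -- the potential
  set Wf : ℝ → ℝ := fun t =>
    (β * γ - μ) * (β * α - μ) * μ / (β ^ 2 * α * γ - μ ^ 2) - μ * (g₁ t + g₂ t) with hWdef
  have hWcont : ∀ t ∈ Set.Ioo (0:ℝ) 1, ContinuousAt Wf t := by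
    intro t ht
    have h1 : |t| < 1 := abs_lt.mpr ⟨by linarith [ht.1], ht.2⟩
    exact continuousAt_const.sub (continuousAt_const.mul
      ((hg₁C t h1).continuousAt.add (hg₂C t h1).continuousAt))
  -- the ODE
  have hODE : ∀ t ∈ Set.Ioo (0:ℝ) 1,
      deriv (deriv g) t = -(((N:ℝ)-1) / t * deriv g t) - Wf t * g t := by
    intro t ht
    have htabs : |t| < 1 := abs_lt.mpr ⟨by linarith [ht.1], ht.2⟩
    have hxball : t • e ∈ ball (0:EuclideanSpace ℝ (Fin N)) 1 := hmemo t htabs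
    have hx0 : t • e ≠ (0:EuclideanSpace ℝ (Fin N)) := by
      rw [← norm_pos_iff, hnsmul]
      exact abs_pos.mpr (ne_of_gt ht.1)
    have hnx : ‖t • e‖ = t := by rw [hnsmul]; exact abs_of_pos ht.1
    have lap₁ : lap w₁ (t • e) = deriv (deriv g₁) t + ((N:ℝ)-1)/t * deriv g₁ t := by
      have h := lap_radial hx0 (hC w₁ hreg₁ _ (by rw [hnsmul]; exact htabs))
        (by rw [hnx]; exact hg₁C t htabs) (hlocgen w₁ hrad₁ _ (by rw [hnsmul]; exact htabs))
      rwa [hnx] at h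
    have lap₂ : lap w₂ (t • e) = deriv (deriv g₂) t + ((N:ℝ)-1)/t * deriv g₂ t := by
      have h := lap_radial hx0 (hC w₂ hreg₂ _ (by rw [hnsmul]; exact htabs))
        (by rw [hnx]; exact hg₂C t htabs) (hlocgen w₂ hrad₂ _ (by rw [hnsmul]; exact htabs))
      rwa [hnx] at h
    have hdg : ∀ s : ℝ, |s| < 1 →
        deriv g s = (β*γ-μ) * deriv g₁ s - (β*α-μ) * deriv g₂ s := by
      intro s hs
      have h1 := (aux_deriv (hg₁C s hs)).1
      have h2 := (aux_deriv (hg₂C s hs)).1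
      have h3 : HasDerivAt g ((β*γ-μ) * deriv g₁ s - (β*α-μ) * deriv g₂ s) s :=
        (h1.const_mul _).sub (h2.const_mul _)
      exact h3.deriv
    have hddg : deriv (deriv g) t =
        (β*γ-μ) * deriv (deriv g₁) t - (β*α-μ) * deriv (deriv g₂) t := by
      have hev : deriv g =ᶠ[𝓝 t]
          fun s => (β*γ-μ) * deriv g₁ s - (β*α-μ) * deriv g₂ s := by
        filter_upwards [Ioo_mem_nhds (show (-1:ℝ) < t by linarith [ht.1]) ht.2] with s hs
        exact hdg s (abs_lt.mpr ⟨by linarith [hs.1], hs.2⟩)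
      rw [hev.deriv_eq]
      have h1 := (aux_deriv (hg₁C t htabs)).2.1
      have h2 := (aux_deriv (hg₂C t htabs)).2.1
      exact ((h1.const_mul _).sub (h2.const_mul _)).deriv
    have e₁ := heq₁ (t • e) hxball
    have e₂ := heq₂ (t • e) hxball
    have hw1 : w₁ (t • e) = g₁ t := rfl
    have hw2 : w₂ (t • e) = g₂ t := rfl
    rw [hw1, hw2] at e₁ e₂
    have key : (β*γ-μ) * lap w₁ (t•e) - (β*α-μ) * lap w₂ (t•e) + Wf t * g t = 0 := by
      have hl1 : lap w₁ (t•e) =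
          -((g₁ t + (β*α-μ)*μ/(β^2*α*γ-μ^2)) * (-(μ * g₁ t) - β*α*g₂ t)) := by linarith
      have hl2 : lap w₂ (t•e) =
          -((g₂ t + (β*γ-μ)*μ/(β^2*α*γ-μ^2)) * (-(μ * g₂ t) - β*γ*g₁ t)) := by linarith
      rw [hl1, hl2]
      have hgt : g t = (β*γ-μ) * g₁ t - (β*α-μ) * g₂ t := rfl
      rw [hgt]
      simp only [hWdef]
      field_simp
      ring
    linear_combination hddg + (((N:ℝ)-1)/t) * (hdg t htabs)
      - (β*γ-μ) * lap₁ + (β*α-μ) * lap₂ + key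
  -- initial conditions at r₀
  set r₀ : ℝ := ‖x₀‖ with hr₀def
  have hx₀cb : x₀ ∈ closedBall (0:EuclideanSpace ℝ (Fin N)) 1 :=
    mem_closedBall_zero_iff.mpr hx₀lt.le
  have hgr₀ : g r₀ = 0 := by
    have h := hvrad x₀ hx₀cb (r₀ • e)
      (hmem _ (by rw [abs_of_nonneg (norm_nonneg _)]; exact hx₀lt.le))
      (by rw [hnsmul, abs_of_nonneg (norm_nonneg _)])
    show v (r₀ • e) = 0
    rw [← h]
    exact hv₀
  have hvdiff : DifferentiableAt ℝ v x₀ :=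
    (hC v hvreg x₀ hx₀lt).differentiableAt two_ne_zero
  have hfd : fderiv ℝ v x₀ = 0 := by
    have h2 := congrArg (InnerProductSpace.toDual ℝ (EuclideanSpace ℝ (Fin N))) hgrad₀
    rw [map_zero] at h2
    unfold gradient at h2
    rwa [LinearIsometryEquiv.apply_symm_apply] at h2
  have hr₀pos : 0 < r₀ := hx₀pos
  set u₀ : EuclideanSpace ℝ (Fin N) := r₀⁻¹ • x₀ with hu₀def
  have hu₀n : ‖u₀‖ = 1 := by
    rw [hu₀def, norm_smul, Real.norm_eq_abs, abs_of_pos (inv_pos.mpr hr₀pos)]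
    rw [← hr₀def]
    field_simp
  have hru : r₀ • u₀ = x₀ := by
    rw [hu₀def, smul_smul, mul_inv_cancel₀ hr₀pos.ne', one_smul]
  have hEq : g =ᶠ[𝓝 r₀] fun t => v (t • u₀) := by
    filter_upwards [Ioo_mem_nhds (show (-1:ℝ) < r₀ by linarith) hx₀lt] with t ht
    have htabs : |t| ≤ 1 := le_of_lt (abs_lt.mpr ⟨by linarith [ht.1], ht.2⟩)
    apply hvrad (t • e) (hmem t htabs) (t • u₀)
    · rw [mem_closedBall_zero_iff, norm_smul, hu₀n, mul_one, Real.norm_eq_abs]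
      exact htabs
    · rw [hnsmul, norm_smul, hu₀n, mul_one, Real.norm_eq_abs]
  have hdgr₀ : deriv g r₀ = 0 := by
    have hline : HasDerivAt (fun t : ℝ => t • u₀) u₀ r₀ := by
      simpa using (hasDerivAt_id r₀).smul_const u₀
    have hvfd : HasFDerivAt v (fderiv ℝ v x₀) (r₀ • u₀) := by
      rw [hru]; exact hvdiff.hasFDerivAt
    have hcomp : HasDerivAt (fun t : ℝ => v (t • u₀)) (fderiv ℝ v x₀ u₀) r₀ :=
      by have h := hvfd.comp_hasDerivAt r₀ hline; exact h
    rw [hEq.deriv_eq, hcomp.deriv, hfd]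
    simp
  -- conclude g = 0 on (0,1)
  have hkN : (0:ℝ) ≤ (N:ℝ) - 1 := by
    have h2 : (2:ℝ) ≤ (N:ℝ) := by exact_mod_cast hN
    linarith
  have hzero : ∀ t ∈ Set.Ioo (0:ℝ) 1, g t = 0 :=
    ode_zero g Wf ((N:ℝ)-1) hkN
      (fun t ht => hgC t (abs_lt.mpr ⟨by linarith [ht.1], ht.2⟩))
      hWcont hODE ⟨hr₀pos, hx₀lt⟩ hgr₀ hdgr₀
  -- extend to [0,1] by continuity
  have hgcont : ContinuousOn g (Set.Icc (-1:ℝ) 1) := by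
    apply (hvreg.continuousOn).comp (continuous_id.smul continuous_const).continuousOn
    intro t ht
    exact hmem t (abs_le.mpr ⟨ht.1, ht.2⟩)
  have hlim : ∀ s ∈ Set.Icc (0:ℝ) 1, g s = 0 := by
    intro s hs
    by_cases hIoo : s ∈ Set.Ioo (0:ℝ) 1
    · exact hzero s hIoo
    · have hclos : s ∈ closure (Set.Ioo (0:ℝ) 1) := by
        rw [closure_Ioo (by norm_num : (0:ℝ) ≠ 1)]
        exact hs
      haveI hne : (𝓝[Set.Ioo (0:ℝ) 1] s).NeBot :=
        mem_closure_iff_nhdsWithin_neBot.mp hclos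
      have hcw : Tendsto g (𝓝[Set.Ioo (0:ℝ) 1] s) (𝓝 (g s)) :=
        ((hgcont s ⟨by linarith [hs.1], hs.2⟩).mono
          (fun t ht => ⟨by linarith [ht.1], ht.2.le⟩))
      have h2 : Tendsto g (𝓝[Set.Ioo (0:ℝ) 1] s) (𝓝 0) := by
        apply Tendsto.congr' _ tendsto_const_nhds
        filter_upwards [eventually_mem_nhdsWithin] with t ht
        exact (hzero t ht).symm
      exact tendsto_nhds_unique hcw h2
  -- finish
  intro x hx
  have hx1 : ‖x‖ ≤ 1 := mem_closedBall_zero_iff.mp hx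
  have h := hvrad x hx (‖x‖ • e)
    (hmem _ (by rw [abs_of_nonneg (norm_nonneg x)]; exact hx1))
    (by rw [hnsmul, abs_of_nonneg (norm_nonneg x)])
  show v x = 0
  rw [h]
  exact hlim ‖x‖ ⟨norm_nonneg x, hx1⟩
end
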